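/- arXiv:0911.0922 — 3 statements merged into one kernel-verified Lean document; each statement's English description precedes it below -/
import Mathlib

section
/- Conversely, given a commutative associative unital ℂ-algebra A with a derivation T, defining a_(n) b = 0 for n ≥ 0 and a_(n) b = (T^{−n−1}(a)/(−n−1)!) · b for n ≤ −1, with vacuum 𝟙 = 1_A, yields a vertex algebra structure on A (the Borcherds identity and vacuum axioms hold). -/
open Finset
namespace VA4


variable {A : Type} [CommRing A] [Algebra ℂ A] (T : Derivation ℂ A A)

noncomputable def DD (p : ℕ) (x : A) : A := ((p.factorial : ℂ))⁻¹ • (⇑T)^[p] x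

lemma iter_zero (p : ℕ) : (⇑T)^[p] (0 : A) = 0 := by
  induction p with
  | zero => rfl
  | succ p ih => rw [Function.iterate_succ_apply, map_zero, ih]

lemma iter_smul (p : ℕ) (c : ℂ) (x : A) : (⇑T)^[p] (c • x) = c • (⇑T)^[p] x := by
  induction p generalizing x with
  | zero => rfl
  | succ p ih => rw [Function.iterate_succ_apply, T.map_smul, ih,
      ← Function.iterate_succ_apply]

lemma iter_one (p : ℕ) : (⇑T)^[p + 1] (1 : A) = 0 := by
  rw [Function.iterate_succ_apply, Derivation.map_one_eq_zero, iter_zero]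

lemma DD_zero_apply (x : A) : DD T 0 x = x := by simp [DD]

lemma iter_leibniz (p : ℕ) (x y : A) :
    (⇑T)^[p] (x * y) = ∑ i ∈ range (p + 1), p.choose i • ((⇑T)^[p - i] x * (⇑T)^[i] y) := by
  induction p with
  | zero => simp
  | succ n IH =>
    calc
      (⇑T)^[n + 1] (x * y) =
          T (∑ k ∈ range n.succ, n.choose k • ((⇑T)^[n - k] x * (⇑T)^[k] y)) := by
        rw [Function.iterate_succ_apply', IH]
      _ = (∑ k ∈ range n.succ, n.choose k • ((⇑T)^[n - k + 1] x * (⇑T)^[k] y)) +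
          ∑ k ∈ range n.succ, n.choose k • ((⇑T)^[n - k] x * (⇑T)^[k + 1] y) := by
        rw [map_sum, ← sum_add_distrib]
        refine sum_congr rfl fun k _ => ?_
        rw [map_nsmul, ← smul_add]
        congr 1
        rw [Function.iterate_succ_apply', Function.iterate_succ_apply', T.leibniz,
          smul_eq_mul, smul_eq_mul]
        ring
      _ = (∑ k ∈ range n.succ, n.choose k.succ • ((⇑T)^[n - k] x * (⇑T)^[k + 1] y)) +
              1 • ((⇑T)^[n + 1] x * (⇑T)^[0] y) +
            ∑ k ∈ range n.succ, n.choose k • ((⇑T)^[n - k] x * (⇑T)^[k + 1] y) := ?_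
      _ = ((∑ k ∈ range n.succ, n.choose k • ((⇑T)^[n - k] x * (⇑T)^[k + 1] y)) +
              ∑ k ∈ range n.succ, n.choose k.succ • ((⇑T)^[n - k] x * (⇑T)^[k + 1] y)) +
            1 • ((⇑T)^[n + 1] x * (⇑T)^[0] y) := by
        rw [add_comm, add_assoc]
      _ = (∑ i ∈ range n.succ,
              (n + 1).choose (i + 1) • ((⇑T)^[n + 1 - (i + 1)] x * (⇑T)^[i + 1] y)) +
            1 • ((⇑T)^[n + 1] x * (⇑T)^[0] y) := by
        simp_rw [Nat.choose_succ_succ, Nat.succ_sub_succ, add_smul, sum_add_distrib]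
      _ = ∑ k ∈ range n.succ.succ,
            n.succ.choose k • ((⇑T)^[n.succ - k] x * (⇑T)^[k] y) := by
        rw [sum_range_succ' _ n.succ, Nat.choose_zero_right, tsub_zero]
    congr
    refine (sum_range_succ' _ _).trans (congr_arg₂ (· + ·) ?_ ?_)
    · rw [sum_range_succ, Nat.choose_succ_self, zero_smul, add_zero]
      refine sum_congr rfl fun k hk => ?_
      rw [mem_range] at hk
      congr
      omega
    · rw [Nat.choose_zero_right, tsub_zero]

lemma DD_mul (p : ℕ) (x y : A) :
    DD T p (x * y) = ∑ i ∈ range (p + 1), DD T (p - i) x * DD T i y := by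
  rw [DD, iter_leibniz, Finset.smul_sum]
  refine Finset.sum_congr rfl fun i hi => ?_
  rw [mem_range, Nat.lt_succ_iff] at hi
  rw [DD, DD, smul_mul_smul_comm, ← Nat.cast_smul_eq_nsmul ℂ, smul_smul]
  congr 1
  have h := Nat.choose_mul_factorial_mul_factorial hi
  have h1 : (p.factorial : ℂ) ≠ 0 := Nat.cast_ne_zero.mpr p.factorial_ne_zero
  have h2 : ((p - i).factorial : ℂ) ≠ 0 := Nat.cast_ne_zero.mpr (p - i).factorial_ne_zero
  have h3 : ((i).factorial : ℂ) ≠ 0 := Nat.cast_ne_zero.mpr (i).factorial_ne_zero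
  field_simp
  rw [mul_assoc, mul_comm ((p-i).factorial : ℂ), ← mul_assoc]
  push_cast [← h]
  ring

lemma DD_DD (i s : ℕ) (x : A) :
    DD T i (DD T s x) = (((i + s).choose i : ℕ) : ℂ) • DD T (i + s) x := by
  rw [DD, DD, iter_smul, ← Function.iterate_add_apply, DD, smul_smul, smul_smul]
  congr 1
  have h := Nat.add_choose_mul_factorial_mul_factorial i s
  have h1 : ((i + s).factorial : ℂ) ≠ 0 := Nat.cast_ne_zero.mpr (i + s).factorial_ne_zero
  have h2 : ((i).factorial : ℂ) ≠ 0 := Nat.cast_ne_zero.mpr (i).factorial_ne_zero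
  have h3 : ((s).factorial : ℂ) ≠ 0 := Nat.cast_ne_zero.mpr (s).factorial_ne_zero
  have hsym : (i + s).choose i = (i + s).choose s := by
    rw [← Nat.choose_symm (Nat.le_add_left s i), Nat.add_sub_cancel]
  field_simp
  push_cast [hsym, ← h]
  ring





lemma descPoch_neg (ν d : ℕ) :
    (descPochhammer ℤ d).smeval (-1 - (ν : ℤ)) = (-1) ^ d * ((ν + d).descFactorial d : ℤ) := by
  induction d with
  | zero => simp
  | succ d ih =>
    rw [descPochhammer_succ_right, Polynomial.smeval_mul, ih, Polynomial.smeval_sub,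
      Polynomial.smeval_X, Polynomial.smeval_natCast]
    have h : (ν + (d + 1)).descFactorial (d + 1) = (ν + d + 1) * (ν + d).descFactorial d :=
      Nat.succ_descFactorial_succ (ν + d) d
    push_cast [h]
    ring

lemma neg_choose (ν d : ℕ) :
    Ring.choose (-1 - (ν : ℤ)) d = (-1) ^ d * ((ν + d).choose d : ℤ) := by
  have h := Ring.descPochhammer_eq_factorial_smul_choose (R := ℤ) (-1 - (ν : ℤ)) d
  rw [descPoch_neg] at h
  have hd : (d.factorial : ℤ) ≠ 0 := Int.natCast_ne_zero.mpr d.factorial_ne_zero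
  refine mul_left_cancel₀ hd ?_
  rw [← nsmul_eq_mul, ← h, Nat.descFactorial_eq_factorial_mul_choose]
  push_cast
  ring

lemma choose_nonneg (M : ℤ) (hM : 0 ≤ M) (d : ℕ) :
    Ring.choose M d = (M.toNat.choose d : ℤ) := by
  conv_lhs => rw [show M = (M.toNat : ℤ) by omega]
  rw [Ring.choose_natCast]

lemma KEY (M n : ℤ) :
    (if n ≤ -1 then Ring.choose M (-n - 1).toNat else 0)
      = (if 0 ≤ M + n + 1 then (-1) ^ ((M + n + 1).toNat) * Ring.choose n (M + n + 1).toNat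
          else 0)
        - (if M + 1 ≤ 0 then
            (-1) ^ ((-M - 1).toNat) * Ring.choose n (-M - 1).toNat * (n.negOnePow : ℤ)
          else 0) := by
  rcases le_or_gt n (-1) with hn | hn
  · -- n ≤ -1
    set ν : ℕ := (-n - 1).toNat with hν
    have hn' : n = -1 - (ν : ℤ) := by omega
    have hnegone : (n.negOnePow : ℤ) = (-1) ^ (ν + 1) := by
      have h : n = -((ν + 1 : ℕ) : ℤ) := by omega
      rw [h, Int.negOnePow_neg, Int.coe_negOnePow_natCast]
    rw [if_pos hn]
    rcases le_or_gt 0 M with hM | hM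
    · -- M ≥ 0
      rw [if_neg (show ¬(M + 1 ≤ 0) by omega), sub_zero]
      rcases le_or_gt (ν : ℤ) M with hMν | hMν
      · rw [if_pos (show 0 ≤ M + n + 1 by omega)]
        set d : ℕ := (M + n + 1).toNat with hd
        have h1 : Ring.choose n d = (-1) ^ d * ((ν + d).choose d : ℤ) := by
          rw [hn', neg_choose]
        rw [h1, ← mul_assoc, ← mul_pow, neg_one_mul, neg_neg, one_pow, one_mul]
        rw [choose_nonneg M hM]
        congr 1
        have h2 : ν + d = M.toNat := by omega
        have h3 : d = M.toNat - ν := by omega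
        rw [h2, h3, Nat.choose_symm (by omega)]
      · rw [if_neg (show ¬(0 ≤ M + n + 1) by omega), choose_nonneg M hM]
        norm_cast
        exact Nat.choose_eq_zero_of_lt (by omega)
    · -- M ≤ -1
      rw [if_neg (show ¬(0 ≤ M + n + 1) by omega), if_pos (show M + 1 ≤ 0 by omega), zero_sub]
      set μ : ℕ := (-M - 1).toNat with hμ
      have hM' : M = -1 - (μ : ℤ) := by omega
      rw [hnegone, hn', hM', neg_choose, neg_choose]
      have hsym : ((μ + ν).choose ν : ℤ) = ((ν + μ).choose μ : ℤ) := by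
        have h := Nat.choose_symm (Nat.le_add_left ν μ)
        rw [Nat.add_sub_cancel] at h
        rw [Nat.add_comm ν μ]
        exact_mod_cast h.symm
      rw [hsym]
      have hsq : ((-1 : ℤ)) ^ (μ * 2) = 1 := by rw [mul_comm, pow_mul]; norm_num
      linear_combination (((ν + μ).choose μ : ℤ) * (-1 : ℤ) ^ (ν + 1)) * hsq
  · -- n ≥ 0
    rw [if_neg (show ¬(n ≤ -1) by omega)]
    have hnn : n = ((n.toNat : ℕ) : ℤ) := by omega
    set nt : ℕ := n.toNat with hnt
    have hnegone : (n.negOnePow : ℤ) = (-1) ^ nt := by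
      rw [hnn, Int.coe_negOnePow_natCast]
    rcases le_or_gt 0 (M + n + 1) with h1 | h1
    · rcases le_or_gt (M + 1) 0 with h2 | h2
      · rw [if_pos (show 0 ≤ M + n + 1 from h1), if_pos (show M + 1 ≤ 0 from h2)]
        set d1 : ℕ := (M + n + 1).toNat with hd1
        set d2 : ℕ := (-M - 1).toNat with hd2
        have hsum : d1 + d2 = nt := by omega
        have hc : Ring.choose n d2 = Ring.choose n d1 := by
          rw [choose_nonneg n (by omega), choose_nonneg n (by omega)]
          have h := Nat.choose_symm (show d2 ≤ d1 + d2 by omega)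
          rw [show d1 + d2 - d2 = d1 by omega, hsum] at h
          exact_mod_cast h.symm
        have hpow : (-1 : ℤ) ^ d2 * (-1) ^ nt = (-1) ^ d1 := by
          rw [← pow_add, show d2 + nt = d1 + 2 * d2 by omega, pow_add, pow_mul]
          simp
        rw [hc, hnegone]
        linear_combination (Ring.choose n d1) * hpow
      · rw [if_pos (show 0 ≤ M + n + 1 from h1), if_neg (show ¬(M + 1 ≤ 0) by omega)]
        rw [choose_nonneg n (by omega), Nat.choose_eq_zero_of_lt (show n.toNat < (M + n + 1).toNat by omega)]
        ring
    · rw [if_neg (show ¬(0 ≤ M + n + 1) by omega), if_pos (show M + 1 ≤ 0 by omega)]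
      rw [choose_nonneg n (by omega), Nat.choose_eq_zero_of_lt (show n.toNat < (-M - 1).toNat by omega)]
      ring





lemma SL (m n k N : ℤ) (hN : N = -(m + n + k) - 2) (p : ℕ) (hp : (p : ℤ) ≤ N ∨ N < 0)
    (J : ℕ) (hJ : (-n).toNat < J) :
    (∑ j ∈ range J, if n + (j : ℤ) ≤ -1 ∧ m + k - (j : ℤ) ≤ -1 ∧ (-(n + (j : ℤ)) - 1).toNat ≤ p
        then Ring.choose m j * (p.choose (p - (-(n + (j : ℤ)) - 1).toNat) : ℤ) else 0)
      = if n ≤ -1 ∧ (p : ℤ) ≤ N then Ring.choose (m + (p : ℤ)) (-n - 1).toNat else 0 := by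
  rcases le_or_gt n (-1) with hn | hn
  · set ν : ℕ := (-n - 1).toNat with hν
    have hν' : (ν : ℤ) = -n - 1 := by omega
    have step1 : ∀ j ∈ range J,
        (if n + (j : ℤ) ≤ -1 ∧ m + k - (j : ℤ) ≤ -1 ∧ (-(n + (j : ℤ)) - 1).toNat ≤ p
          then Ring.choose m j * (p.choose (p - (-(n + (j : ℤ)) - 1).toNat) : ℤ) else 0)
        = (if j ≤ ν ∧ ν - j ≤ p ∧ ((ν : ℤ) - (j : ℤ) ≤ N)
          then Ring.choose m j * (p.choose (ν - j) : ℤ) else 0) := by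
      intro j _
      by_cases hc : j ≤ ν ∧ ν - j ≤ p ∧ ((ν : ℤ) - (j : ℤ) ≤ N)
      · rw [if_pos hc, if_pos (by omega)]
        have e1 : (-(n + (j : ℤ)) - 1).toNat = ν - j := by omega
        rw [e1, Nat.choose_symm hc.2.1]
      · rw [if_neg hc, if_neg (by omega)]
    rw [Finset.sum_congr rfl step1]
    rcases hp with hp | hp
    · -- p ≤ N
      rw [if_pos ⟨hn, hp⟩]
      have step2 : ∀ j ∈ range J,
          (if j ≤ ν ∧ ν - j ≤ p ∧ ((ν : ℤ) - (j : ℤ) ≤ N)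
            then Ring.choose m j * (p.choose (ν - j) : ℤ) else 0)
          = (if j ≤ ν then Ring.choose m j * (p.choose (ν - j) : ℤ) else 0) := by
        intro j _
        by_cases hj : j ≤ ν
        · by_cases hc : ν - j ≤ p
          · rw [if_pos ⟨hj, hc, by omega⟩, if_pos hj]
          · rw [if_neg (by omega), if_pos hj,
              Nat.choose_eq_zero_of_lt (show p < ν - j by omega), Nat.cast_zero, mul_zero]
        · rw [if_neg (by omega), if_neg hj]
      rw [Finset.sum_congr rfl step2]
      rw [← Finset.sum_subset (Finset.range_subset_range.mpr (show ν + 1 ≤ J by omega))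
        (fun j _ hj => by rw [if_neg (fun hc => hj (Finset.mem_range.mpr (by omega)))])]
      rw [Ring.add_choose_eq _ (Commute.all m (p : ℤ)),
        Finset.Nat.sum_antidiagonal_eq_sum_range_succ_mk]
      refine Finset.sum_congr rfl fun j hj => ?_
      rw [mem_range] at hj
      rw [if_pos (by omega), Ring.choose_natCast]
    · -- N < 0
      rw [if_neg (by omega)]
      refine Finset.sum_eq_zero fun j _ => if_neg (by omega)
  · rw [if_neg (by omega)]
    refine Finset.sum_eq_zero fun j _ => if_neg (by omega)

lemma SRaux (e : ℕ → ℤ) (Q : Prop) [Decidable Q] (j0 : ℕ) (J : ℕ) (hj0 : Q → j0 < J)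
    (C : ℕ → Prop) [DecidablePred C] (hC : ∀ j, j < J → (C j ↔ (j = j0 ∧ Q))) :
    (∑ j ∈ range J, if C j then e j else 0) = if Q then e j0 else 0 := by
  have h1 : ∀ j ∈ range J, (if C j then e j else 0) = if j = j0 ∧ Q then e j else 0 := by
    intro j hj
    rw [mem_range] at hj
    by_cases hc : C j
    · rw [if_pos hc, if_pos ((hC j hj).mp hc)]
    · rw [if_neg hc, if_neg (fun h => hc ((hC j hj).mpr h))]
  rw [Finset.sum_congr rfl h1]
  by_cases hQ : Q
  · simp only [hQ, and_true]
    rw [Finset.sum_ite_eq' (range J) j0 e, if_pos (mem_range.mpr (hj0 hQ))]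
    simp
  · rw [if_neg hQ]
    refine Finset.sum_eq_zero fun j _ => if_neg (by tauto)

lemma SR1 (m n k N : ℤ) (hN : N = -(m + n + k) - 2) (p : ℕ)
    (J : ℕ) (hJ : (-k).toNat < J) :
    (∑ j ∈ range J, if k + (j : ℤ) ≤ -1 ∧ m + n - (j : ℤ) ≤ -1 ∧ (p : ℤ) = -(m + n - (j : ℤ)) - 1
        then (-1) ^ j * Ring.choose n j else 0)
      = if 0 ≤ m + (p : ℤ) + n + 1 ∧ (p : ℤ) ≤ N
          then (-1) ^ ((m + (p : ℤ) + n + 1).toNat) * Ring.choose n (m + (p : ℤ) + n + 1).toNat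
          else 0 := by
  rw [SRaux (fun j => (-1) ^ j * Ring.choose n j) (0 ≤ m + (p : ℤ) + n + 1 ∧ (p : ℤ) ≤ N)
    ((m + (p : ℤ) + n + 1).toNat) J (fun hQ => by omega) _ (fun j hj => by omega)]

lemma SR2 (m n k N : ℤ) (hN : N = -(m + n + k) - 2) (p : ℕ)
    (J : ℕ) (hJ : (-m).toNat < J) :
    (∑ j ∈ range J, if m + (j : ℤ) ≤ -1 ∧ n + k - (j : ℤ) ≤ -1 ∧ (p : ℤ) = -(m + (j : ℤ)) - 1
        then (-1) ^ j * Ring.choose n j * (n.negOnePow : ℤ) else 0)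
      = if 0 ≤ -(m + (p : ℤ)) - 1 ∧ (p : ℤ) ≤ N
          then (-1) ^ ((-(m + (p : ℤ)) - 1).toNat) * Ring.choose n (-(m + (p : ℤ)) - 1).toNat
            * (n.negOnePow : ℤ)
          else 0 := by
  rw [SRaux (fun j => (-1) ^ j * Ring.choose n j * (n.negOnePow : ℤ))
    (0 ≤ -(m + (p : ℤ)) - 1 ∧ (p : ℤ) ≤ N)
    ((-(m + (p : ℤ)) - 1).toNat) J (fun hQ => by omega) _ (fun j hj => by omega)]


section StepLemmas

variable {A : Type} [CommRing A] [Algebra ℂ A] (T : Derivation ℂ A A)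
variable (f : ℤ → A → A → A)
variable (hf : ∀ (n : ℤ) (a b : A), f n a b =
      if 0 ≤ n then 0
      else ((Nat.factorial ((-n - 1).toNat) : ℂ))⁻¹ • ((⇑T)^[(-n - 1).toNat] a * b))

include hf

lemma f_nonneg (r : ℤ) (hr : 0 ≤ r) (x y : A) : f r x y = 0 := by
  rw [hf, if_pos hr]

lemma f_eq_DD (r : ℤ) (hr : r ≤ -1) (x y : A) : f r x y = DD T (-r - 1).toNat x * y := by
  rw [hf, if_neg (by omega), DD, smul_mul_assoc]

lemma f_zero_left (r : ℤ) (y : A) : f r 0 y = 0 := by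
  rw [hf]
  split
  · rfl
  · rw [iter_zero, zero_mul, smul_zero]

lemma f_zero_right (r : ℤ) (x : A) : f r x 0 = 0 := by
  rw [hf]
  split
  · rfl
  · rw [mul_zero, smul_zero]

lemma stepA (a b c : A) (m n k : ℤ) (Nt : ℕ) (hNt : Nt = (-(m + n + k) - 2).toNat) (j : ℕ) :
    Ring.choose m j • f (m + k - (j : ℤ)) (f (n + (j : ℤ)) a b) c
      = ∑ p ∈ Finset.range (Nt + 1),
          (((if n + (j : ℤ) ≤ -1 ∧ m + k - (j : ℤ) ≤ -1 ∧ (-(n + (j : ℤ)) - 1).toNat ≤ p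
              then Ring.choose m j * (p.choose (p - (-(n + (j : ℤ)) - 1).toNat) : ℤ)
              else 0 : ℤ) : ℂ))
            • (DD T p a * (DD T (Nt - p) b * c)) := by
  by_cases h1 : n + (j : ℤ) ≤ -1
  swap
  · rw [f_nonneg T f hf _ (by omega) a b, f_zero_left T f hf, smul_zero]
    symm
    refine Finset.sum_eq_zero fun p _ => ?_
    rw [if_neg (by omega), Int.cast_zero, zero_smul]
  by_cases h2 : m + k - (j : ℤ) ≤ -1
  swap
  · rw [f_nonneg T f hf _ (by omega), smul_zero]
    symm
    refine Finset.sum_eq_zero fun p _ => ?_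
    rw [if_neg (by omega), Int.cast_zero, zero_smul]
  set s : ℕ := (-(n + (j : ℤ)) - 1).toNat with hs
  set q : ℕ := (-(m + k - (j : ℤ)) - 1).toNat with hq
  have hsq : s + q = Nt := by omega
  rw [f_eq_DD T f hf _ h1, f_eq_DD T f hf _ h2, ← hs, ← hq, DD_mul, Finset.sum_mul,
    Finset.smul_sum]
  rw [← Finset.sum_range_reflect
    (fun p => (((if n + (j : ℤ) ≤ -1 ∧ m + k - (j : ℤ) ≤ -1 ∧ s ≤ p
        then Ring.choose m j * (p.choose (p - s) : ℤ) else 0 : ℤ) : ℂ))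
      • (DD T p a * (DD T (Nt - p) b * c))) (Nt + 1)]
  rw [← Finset.sum_subset (Finset.range_subset_range.mpr (show q + 1 ≤ Nt + 1 by omega))
    (fun i hi hi' => ?_)]
  · refine Finset.sum_congr rfl fun i hi => ?_
    rw [Finset.mem_range, Nat.lt_succ_iff] at hi
    have e0 : Nt + 1 - 1 - i = Nt - i := by omega
    rw [e0, DD_DD, if_pos ⟨h1, h2, by omega⟩]
    have e1 : q - i + s = Nt - i := by omega
    have e2 : Nt - (Nt - i) = i := by omega
    have e3 : (Nt - i) - s = q - i := by omega
    rw [e1, e2, e3, ← Int.cast_smul_eq_zsmul ℂ, smul_mul_assoc, smul_mul_assoc, smul_smul,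
      mul_assoc, Int.cast_mul, Int.cast_natCast]
  · rw [Finset.mem_range, Nat.lt_succ_iff] at hi
    rw [Finset.mem_range, Nat.lt_succ_iff, not_le] at hi'
    have e0 : Nt + 1 - 1 - i = Nt - i := by omega
    rw [e0, if_neg (by omega), Int.cast_zero, zero_smul]

lemma stepB (a b c : A) (m n k : ℤ) (Nt : ℕ) (hNt : Nt = (-(m + n + k) - 2).toNat) (j : ℕ) :
    ((-1 : ℤ) ^ j * Ring.choose n j) •
        (f (m + n - (j : ℤ)) a (f (k + (j : ℤ)) b c)
          - (n.negOnePow : ℤ) • f (n + k - (j : ℤ)) b (f (m + (j : ℤ)) a c))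
      = ∑ p ∈ Finset.range (Nt + 1),
          ((((if k + (j : ℤ) ≤ -1 ∧ m + n - (j : ℤ) ≤ -1 ∧ (p : ℤ) = -(m + n - (j : ℤ)) - 1
              then (-1) ^ j * Ring.choose n j else 0)
            - (if m + (j : ℤ) ≤ -1 ∧ n + k - (j : ℤ) ≤ -1 ∧ (p : ℤ) = -(m + (j : ℤ)) - 1
              then (-1) ^ j * Ring.choose n j * (n.negOnePow : ℤ) else 0) : ℤ) : ℂ))
            • (DD T p a * (DD T (Nt - p) b * c)) := by
  have expand : ∀ p ∈ Finset.range (Nt + 1), ((((if k + (j : ℤ) ≤ -1 ∧ m + n - (j : ℤ) ≤ -1 ∧ (p : ℤ) = -(m + n - (j : ℤ)) - 1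
              then (-1) ^ j * Ring.choose n j else 0)
            - (if m + (j : ℤ) ≤ -1 ∧ n + k - (j : ℤ) ≤ -1 ∧ (p : ℤ) = -(m + (j : ℤ)) - 1
              then (-1) ^ j * Ring.choose n j * (n.negOnePow : ℤ) else 0) : ℤ) : ℂ))
            • (DD T p a * (DD T (Nt - p) b * c))
      = (((if k + (j : ℤ) ≤ -1 ∧ m + n - (j : ℤ) ≤ -1 ∧ (p : ℤ) = -(m + n - (j : ℤ)) - 1
              then (-1) ^ j * Ring.choose n j else 0 : ℤ) : ℂ))
            • (DD T p a * (DD T (Nt - p) b * c))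
        - (((if m + (j : ℤ) ≤ -1 ∧ n + k - (j : ℤ) ≤ -1 ∧ (p : ℤ) = -(m + (j : ℤ)) - 1
              then (-1) ^ j * Ring.choose n j * (n.negOnePow : ℤ) else 0 : ℤ) : ℂ))
            • (DD T p a * (DD T (Nt - p) b * c)) := by
    intro p _
    rw [Int.cast_sub, sub_smul]
  rw [Finset.sum_congr rfl expand, Finset.sum_sub_distrib]
  rw [smul_sub, smul_smul]
  congr 1
  · -- part 1
    by_cases hc : k + (j : ℤ) ≤ -1 ∧ m + n - (j : ℤ) ≤ -1
    swap
    · have hz : f (m + n - (j : ℤ)) a (f (k + (j : ℤ)) b c) = 0 := by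
        by_cases hk : k + (j : ℤ) ≤ -1
        · exact f_nonneg T f hf _ (by omega) _ _
        · rw [f_nonneg T f hf _ (by omega) b c, f_zero_right T f hf]
      rw [hz, smul_zero]
      symm
      refine Finset.sum_eq_zero fun p _ => ?_
      rw [if_neg (by tauto), Int.cast_zero, zero_smul]
    set p0 : ℕ := (-(m + n - (j : ℤ)) - 1).toNat with hp0
    have hp0N : p0 ≤ Nt := by omega
    have hrw : ∀ p ∈ Finset.range (Nt + 1),
        (((if k + (j : ℤ) ≤ -1 ∧ m + n - (j : ℤ) ≤ -1 ∧ (p : ℤ) = -(m + n - (j : ℤ)) - 1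
            then (-1) ^ j * Ring.choose n j else 0 : ℤ) : ℂ))
          • (DD T p a * (DD T (Nt - p) b * c))
        = if p = p0 then ((((-1) ^ j * Ring.choose n j : ℤ) : ℂ))
            • (DD T p a * (DD T (Nt - p) b * c)) else 0 := by
      intro p _
      by_cases hp : p = p0
      · rw [if_pos ⟨hc.1, hc.2, by omega⟩, if_pos hp]
      · rw [if_neg (by omega), if_neg hp, Int.cast_zero, zero_smul]
    rw [Finset.sum_congr rfl hrw, Finset.sum_ite_eq' (Finset.range (Nt + 1)) p0,
      if_pos (Finset.mem_range.mpr (by omega))]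
    rw [f_eq_DD T f hf _ hc.2, f_eq_DD T f hf _ hc.1, ← hp0]
    have e1 : (-(k + (j : ℤ)) - 1).toNat = Nt - p0 := by omega
    rw [e1, ← Int.cast_smul_eq_zsmul ℂ]
  · -- part 2
    by_cases hc : m + (j : ℤ) ≤ -1 ∧ n + k - (j : ℤ) ≤ -1
    swap
    · have hz : f (n + k - (j : ℤ)) b (f (m + (j : ℤ)) a c) = 0 := by
        by_cases hk : m + (j : ℤ) ≤ -1
        · exact f_nonneg T f hf _ (by omega) _ _
        · rw [f_nonneg T f hf _ (by omega) a c, f_zero_right T f hf]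
      rw [hz, smul_zero]
      symm
      refine Finset.sum_eq_zero fun p _ => ?_
      rw [if_neg (by tauto), Int.cast_zero, zero_smul]
    set p0 : ℕ := (-(m + (j : ℤ)) - 1).toNat with hp0
    have hp0N : p0 ≤ Nt := by omega
    have hrw : ∀ p ∈ Finset.range (Nt + 1),
        (((if m + (j : ℤ) ≤ -1 ∧ n + k - (j : ℤ) ≤ -1 ∧ (p : ℤ) = -(m + (j : ℤ)) - 1
            then (-1) ^ j * Ring.choose n j * (n.negOnePow : ℤ) else 0 : ℤ) : ℂ))
          • (DD T p a * (DD T (Nt - p) b * c))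
        = if p = p0 then ((((-1) ^ j * Ring.choose n j * (n.negOnePow : ℤ) : ℤ) : ℂ))
            • (DD T p a * (DD T (Nt - p) b * c)) else 0 := by
      intro p _
      by_cases hp : p = p0
      · rw [if_pos ⟨hc.1, hc.2, by omega⟩, if_pos hp]
      · rw [if_neg (by omega), if_neg hp, Int.cast_zero, zero_smul]
    rw [Finset.sum_congr rfl hrw, Finset.sum_ite_eq' (Finset.range (Nt + 1)) p0,
      if_pos (Finset.mem_range.mpr (by omega))]
    rw [f_eq_DD T f hf _ hc.2, f_eq_DD T f hf _ hc.1, ← hp0]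
    have e1 : (-(n + k - (j : ℤ)) - 1).toNat = Nt - p0 := by omega
    rw [e1, ← Int.cast_smul_eq_zsmul ℂ]
    rw [mul_left_comm]

end StepLemmas




lemma coeff_eq (m n k : ℤ) (p : ℕ) (hp : (p : ℤ) ≤ -(m + n + k) - 2 ∨ -(m + n + k) - 2 < 0)
    (J : ℕ) (hJn : (-n).toNat < J) (hJk : (-k).toNat < J) (hJm : (-m).toNat < J) :
    (∑ j ∈ Finset.range J,
      if n + (j : ℤ) ≤ -1 ∧ m + k - (j : ℤ) ≤ -1 ∧ (-(n + (j : ℤ)) - 1).toNat ≤ p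
        then Ring.choose m j * (p.choose (p - (-(n + (j : ℤ)) - 1).toNat) : ℤ) else 0)
    = ∑ j ∈ Finset.range J,
      ((if k + (j : ℤ) ≤ -1 ∧ m + n - (j : ℤ) ≤ -1 ∧ (p : ℤ) = -(m + n - (j : ℤ)) - 1
          then (-1) ^ j * Ring.choose n j else 0)
        - (if m + (j : ℤ) ≤ -1 ∧ n + k - (j : ℤ) ≤ -1 ∧ (p : ℤ) = -(m + (j : ℤ)) - 1
          then (-1) ^ j * Ring.choose n j * (n.negOnePow : ℤ) else 0)) := by
  rw [Finset.sum_sub_distrib,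
    SL m n k (-(m + n + k) - 2) rfl p hp J hJn,
    SR1 m n k (-(m + n + k) - 2) rfl p J hJk,
    SR2 m n k (-(m + n + k) - 2) rfl p J hJm]
  rcases le_or_gt (p : ℤ) (-(m + n + k) - 2) with hpN | hpN
  · simp only [and_iff_left hpN]
    have hiff : (0 ≤ -(m + (p : ℤ)) - 1) ↔ ((m + (p : ℤ)) + 1 ≤ 0) := by omega
    simp only [hiff]
    exact KEY (m + (p : ℤ)) n
  · rw [if_neg (by omega), if_neg (by omega), if_neg (by omega)]
    norm_num

end VA4

/-- a commutative associative unital ℂ-algebra `A` with a derivation `T`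
becomes a vertex algebra with vacuum `1`, `a_(n) b = 0` for `n ≥ 0` and
`a_(n) b = (T^(−n−1) a/(−n−1)!) * b` for `n ≤ −1`: truncation, the vacuum axioms
and the Borcherds identity all hold. -/
theorem comm_alg_with_derivation_gives_vertex_algebra
    (A : Type) [CommRing A] [Algebra ℂ A] (T : Derivation ℂ A A)
    (f : ℤ → A → A → A)
    (hf : ∀ (n : ℤ) (a b : A), f n a b =
      if 0 ≤ n then 0
      else ((Nat.factorial ((-n - 1).toNat) : ℂ))⁻¹ • ((⇑T)^[(-n - 1).toNat] a * b)) :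
    (∀ a b : A, ∃ N : ℤ, ∀ n : ℤ, N ≤ n → f n a b = 0) ∧
    (∀ (n : ℤ) (a : A), f n 1 a = if n = -1 then a else 0) ∧
    (∀ a : A, f (-1) a 1 = a) ∧
    (∀ (a : A) (n : ℤ), 0 ≤ n → f n a 1 = 0) ∧
    (∀ (a b c : A) (m n k : ℤ),
      (∑ᶠ j : ℕ, Ring.choose m j • f (m + k - (j : ℤ)) (f (n + (j : ℤ)) a b) c) =
      ∑ᶠ j : ℕ, ((-1 : ℤ) ^ j * Ring.choose n j) •
        (f (m + n - (j : ℤ)) a (f (k + (j : ℤ)) b c)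
          - (n.negOnePow : ℤ) • f (n + k - (j : ℤ)) b (f (m + (j : ℤ)) a c))) := by
  refine ⟨fun a b => ⟨0, fun n hn => by rw [hf, if_pos hn]⟩, ?_, ?_,
    fun a n hn => by rw [hf, if_pos hn], ?_⟩
  · intro n a
    by_cases hn1 : n = -1
    · subst hn1
      rw [hf, if_neg (by norm_num), if_pos rfl]
      norm_num
    by_cases hn0 : 0 ≤ n
    · rw [hf, if_pos hn0, if_neg hn1]
    · rw [hf, if_neg hn0, if_neg hn1]
      obtain ⟨u, hu⟩ : ∃ u : ℕ, (-n - 1).toNat = u + 1 := ⟨(-n - 1).toNat - 1, by omega⟩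
      rw [hu, VA4.iter_one T u, zero_mul, smul_zero]
  · intro a
    rw [hf, if_neg (by norm_num)]
    norm_num
  · intro a b c m n k
    set Nt : ℕ := (-(m + n + k) - 2).toNat with hNt
    set J : ℕ := (-n).toNat + (-k).toNat + (-m).toNat + 1 with hJ
    have hL : (∑ᶠ j : ℕ, Ring.choose m j • f (m + k - (j : ℤ)) (f (n + (j : ℤ)) a b) c)
        = ∑ j ∈ Finset.range J, Ring.choose m j • f (m + k - (j : ℤ)) (f (n + (j : ℤ)) a b) c := by
      refine finsum_eq_sum_of_support_subset _ fun j hj => ?_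
      rw [Finset.coe_range, Set.mem_Iio]
      by_contra hjJ
      push_neg at hjJ
      exact absurd (by
        rw [VA4.f_nonneg T f hf (n + (j : ℤ)) (by omega) a b, VA4.f_zero_left T f hf, smul_zero])
        (Function.mem_support.mp hj)
    have hR : (∑ᶠ j : ℕ, ((-1 : ℤ) ^ j * Ring.choose n j) •
          (f (m + n - (j : ℤ)) a (f (k + (j : ℤ)) b c)
            - (n.negOnePow : ℤ) • f (n + k - (j : ℤ)) b (f (m + (j : ℤ)) a c)))
        = ∑ j ∈ Finset.range J, ((-1 : ℤ) ^ j * Ring.choose n j) •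
          (f (m + n - (j : ℤ)) a (f (k + (j : ℤ)) b c)
            - (n.negOnePow : ℤ) • f (n + k - (j : ℤ)) b (f (m + (j : ℤ)) a c)) := by
      refine finsum_eq_sum_of_support_subset _ fun j hj => ?_
      rw [Finset.coe_range, Set.mem_Iio]
      by_contra hjJ
      push_neg at hjJ
      exact absurd (by
        rw [VA4.f_nonneg T f hf (k + (j : ℤ)) (by omega) b c, VA4.f_zero_right T f hf,
          VA4.f_nonneg T f hf (m + (j : ℤ)) (by omega) a c, VA4.f_zero_right T f hf,
          smul_zero, sub_zero, smul_zero])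
        (Function.mem_support.mp hj)
    rw [hL, hR]
    have e1 : (∑ j ∈ Finset.range J,
          Ring.choose m j • f (m + k - (j : ℤ)) (f (n + (j : ℤ)) a b) c)
        = ∑ p ∈ Finset.range (Nt + 1), ∑ j ∈ Finset.range J,
            (((if n + (j : ℤ) ≤ -1 ∧ m + k - (j : ℤ) ≤ -1 ∧ (-(n + (j : ℤ)) - 1).toNat ≤ p
                then Ring.choose m j * (p.choose (p - (-(n + (j : ℤ)) - 1).toNat) : ℤ)
                else 0 : ℤ) : ℂ))
              • (VA4.DD T p a * (VA4.DD T (Nt - p) b * c)) := by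
      rw [Finset.sum_congr rfl (fun j _ => VA4.stepA T f hf a b c m n k Nt hNt j)]
      exact Finset.sum_comm
    have e2 : (∑ j ∈ Finset.range J, ((-1 : ℤ) ^ j * Ring.choose n j) •
          (f (m + n - (j : ℤ)) a (f (k + (j : ℤ)) b c)
            - (n.negOnePow : ℤ) • f (n + k - (j : ℤ)) b (f (m + (j : ℤ)) a c)))
        = ∑ p ∈ Finset.range (Nt + 1), ∑ j ∈ Finset.range J,
            ((((if k + (j : ℤ) ≤ -1 ∧ m + n - (j : ℤ) ≤ -1 ∧ (p : ℤ) = -(m + n - (j : ℤ)) - 1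
                then (-1) ^ j * Ring.choose n j else 0)
              - (if m + (j : ℤ) ≤ -1 ∧ n + k - (j : ℤ) ≤ -1 ∧ (p : ℤ) = -(m + (j : ℤ)) - 1
                then (-1) ^ j * Ring.choose n j * (n.negOnePow : ℤ) else 0) : ℤ) : ℂ))
              • (VA4.DD T p a * (VA4.DD T (Nt - p) b * c)) := by
      rw [Finset.sum_congr rfl (fun j _ => VA4.stepB T f hf a b c m n k Nt hNt j)]
      exact Finset.sum_comm
    rw [e1, e2]
    refine Finset.sum_congr rfl fun p hp => ?_
    rw [← Finset.sum_smul, ← Finset.sum_smul]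
    congr 1
    have hple : p ≤ Nt := by
      have := Finset.mem_range.mp hp
      omega
    have hc := VA4.coeff_eq m n k p (by omega) J (by omega) (by omega) (by omega)
    exact_mod_cast hc
end

section
/- Let V = ⊕_{m∈ℤ} V[m] be a ℤ-graded vertex algebra (each product _(n) has degree 0 with respect to the grading). Define new products: u ∗_(n) v = u_(n) v if deg(u)·deg(v) ≥ 0, and u ∗_(n) v = 0 if deg(u)·deg(v) < 0 (for homogeneous u ∈ V[deg u], v ∈ V[deg v]). For t ∈ ℂ*, the rescaling φ_t(v) = t^{|m|} v for v ∈ V[m] conjugates the original products to products _(n),t, where u _(n),t v = u_(n) v if deg(u)·deg(v) ≥ 0 and u _(n),t v = t^{|deg u| + |deg v| − |deg u + deg v|} u_(n) v otherwise; in particular the exponent |deg u| + |deg v| − |deg u + deg v| is a nonnegative even integer, strictly positive when deg(u)·deg(v) < 0, so the limit t → 0 of the products _(n),t exists and equals ∗_(n). -/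
structure VertexAlgebra (V : Type) [AddCommGroup V] [Module ℂ V] where
  vac : V
  mul : ℤ → V →ₗ[ℂ] V →ₗ[ℂ] V
  truncation : ∀ a b : V, ∃ N : ℤ, ∀ n : ℤ, N ≤ n → mul n a b = 0
  vac_mul : ∀ (n : ℤ) (a : V), mul n vac a = if n = -1 then a else 0
  mul_vac : ∀ a : V, mul (-1) a vac = a
  mul_vac_nonneg : ∀ (a : V) (n : ℤ), 0 ≤ n → mul n a vac = 0
  borcherds : ∀ (a b c : V) (m n k : ℤ),
    (∑ᶠ j : ℕ, Ring.choose m j • mul (m + k - (j : ℤ)) (mul (n + (j : ℤ)) a b) c) =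
    ∑ᶠ j : ℕ, ((-1 : ℤ) ^ j * Ring.choose n j) •
      (mul (m + n - (j : ℤ)) a (mul (k + (j : ℤ)) b c)
        - (n.negOnePow : ℤ) • mul (n + k - (j : ℤ)) b (mul (m + (j : ℤ)) a c))

/-- in a ℤ-graded vertex algebra, the rescaling `φ_t = t^{|m|}` on `V[m]`
conjugates the products `_(n)` into `_(n),t` with
`u _(n),t v = t^{|deg u|+|deg v|−|deg u + deg v|} u_(n) v`; the exponent is a nonnegative
even integer, zero when `deg u · deg v ≥ 0` and strictly positive when `deg u · deg v < 0`,
so the `t → 0` limit exists and equals the degenerate products `∗_(n)`. -/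
theorem rescaled_products_degenerate
    (V : Type) [AddCommGroup V] [Module ℂ V] (𝒱 : VertexAlgebra V)
    (P : ℤ → Submodule ℂ V)
    (hgr : ∀ (d e n : ℤ), ∀ u ∈ P d, ∀ v ∈ P e, 𝒱.mul n u v ∈ P (d + e)) :
    (∀ d e : ℤ, 0 ≤ |d| + |e| - |d + e| ∧ Even (|d| + |e| - |d + e|) ∧
      (0 ≤ d * e → |d| + |e| - |d + e| = 0) ∧ (d * e < 0 → 0 < |d| + |e| - |d + e|)) ∧
    -- conjugation by the rescaling φ_t : v ↦ t^{|m|} v on V[m]: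
    (∀ (t : ℂ) (d e n : ℤ) (u v : V), u ∈ P d → v ∈ P e →
      𝒱.mul n ((t ^ d.natAbs) • u) ((t ^ e.natAbs) • v) =
        (t ^ (d + e).natAbs) • ((t ^ (|d| + |e| - |d + e|).toNat) • 𝒱.mul n u v)) ∧
    -- the t → 0 limit of the rescaled product: equal to u_(n) v when deg u · deg v ≥ 0,
    -- and 0 when deg u · deg v < 0
    (∀ (d e n : ℤ) (u v : V), u ∈ P d → v ∈ P e →
      (0 ≤ d * e → ((1 : ℂ) ^ (|d| + |e| - |d + e|).toNat) • 𝒱.mul n u v = 𝒱.mul n u v) ∧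
      (d * e < 0 → ((0 : ℂ) ^ (|d| + |e| - |d + e|).toNat) • 𝒱.mul n u v = 0)) := by

  have sign : ∀ d e : ℤ, (0 ≤ d * e → (0 ≤ d ∧ 0 ≤ e) ∨ (d ≤ 0 ∧ e ≤ 0)) ∧
      (d * e < 0 → (0 < d ∧ e < 0) ∨ (d < 0 ∧ 0 < e)) := by
    intro d e
    constructor
    · intro h
      rcases mul_nonneg_iff.mp h with ⟨h1, h2⟩ | ⟨h1, h2⟩
      · exact Or.inl ⟨h1, h2⟩
      · exact Or.inr ⟨h1, h2⟩
    · intro h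
      rcases mul_neg_iff.mp h with ⟨h1, h2⟩ | ⟨h1, h2⟩
      · exact Or.inl ⟨h1, h2⟩
      · exact Or.inr ⟨h1, h2⟩
  refine ⟨?_, ?_, ?_⟩
  · intro d e
    obtain ⟨s1, s2⟩ := sign d e
    refine ⟨?_, ?_, ?_, ?_⟩
    · simp only [Int.abs_eq_natAbs]; omega
    · rw [Int.even_iff]; simp only [Int.abs_eq_natAbs]; omega
    · intro h; rcases s1 h with ⟨h1, h2⟩ | ⟨h1, h2⟩ <;> simp only [Int.abs_eq_natAbs] <;> omega
    · intro h; rcases s2 h with ⟨h1, h2⟩ | ⟨h1, h2⟩ <;> simp only [Int.abs_eq_natAbs] <;> omega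
  · intro t d e n u v _ _
    simp only [map_smul, LinearMap.smul_apply, smul_smul]
    rw [← pow_add, ← pow_add]
    congr 1
    congr 1
    obtain ⟨s1, s2⟩ := sign d e
    rcases le_or_gt 0 (d * e) with h | h
    · rcases s1 h with ⟨h1, h2⟩ | ⟨h1, h2⟩ <;> simp only [Int.abs_eq_natAbs] <;> omega
    · rcases s2 h with ⟨h1, h2⟩ | ⟨h1, h2⟩ <;> simp only [Int.abs_eq_natAbs] <;> omega
  · intro d e n u v _ _
    obtain ⟨s1, s2⟩ := sign d e
    constructor
    · intro _; rw [one_pow, one_smul]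
    · intro h
      have hk : (|d| + |e| - |d + e|).toNat ≠ 0 := by
        rcases s2 h with ⟨h1, h2⟩ | ⟨h1, h2⟩ <;> simp only [Int.abs_eq_natAbs] <;> omega
      rw [zero_pow hk, zero_smul]
end

section
/- Let V = ⊕_{m∈ℤ} V[m] be a ℤ-graded vertex algebra. The degenerate products u ∗_(n) v (equal to u_(n) v if deg(u)·deg(v) ≥ 0 and to 0 if deg(u)·deg(v) < 0, extended bilinearly) again satisfy the vertex algebra axioms: the vacuum axioms hold, ∗_(n) is eventually zero in n, and the Borcherds identity holds for the products ∗_(n). -/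
private lemma supp_fin {V : Type} [AddCommGroup V]
    (g : ℕ → V) (N : ℤ) (h : ∀ j : ℕ, N ≤ (j : ℤ) → g j = 0) :
    (Function.support g).Finite := by
  apply Set.Finite.subset (Set.finite_Iio N.toNat)
  intro j hj
  rw [Function.mem_support] at hj
  simp only [Set.mem_Iio]
  by_contra hc
  exact hj (h j (by omega))

private lemma signA (d e f : ℤ) (h1 : 0 ≤ d * e) (h2 : 0 ≤ (d + e) * f) :
    (0 ≤ d ∧ 0 ≤ e ∧ 0 ≤ f) ∨ (d ≤ 0 ∧ e ≤ 0 ∧ f ≤ 0) := by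
  rw [mul_nonneg_iff] at h1 h2; omega

private lemma signB (d e f : ℤ) (h1 : 0 ≤ e * f) (h2 : 0 ≤ d * (e + f)) :
    (0 ≤ d ∧ 0 ≤ e ∧ 0 ≤ f) ∨ (d ≤ 0 ∧ e ≤ 0 ∧ f ≤ 0) := by
  rw [mul_nonneg_iff] at h1 h2; omega

private lemma signC (d e f : ℤ) (h1 : 0 ≤ d * f) (h2 : 0 ≤ e * (d + f)) :
    (0 ≤ d ∧ 0 ≤ e ∧ 0 ≤ f) ∨ (d ≤ 0 ∧ e ≤ 0 ∧ f ≤ 0) := by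
  rw [mul_nonneg_iff] at h1 h2; omega

private lemma prodsS (d e f : ℤ)
    (hS : (0 ≤ d ∧ 0 ≤ e ∧ 0 ≤ f) ∨ (d ≤ 0 ∧ e ≤ 0 ∧ f ≤ 0)) :
    0 ≤ d*e ∧ 0 ≤ (d+e)*f ∧ 0 ≤ e*f ∧ 0 ≤ d*(e+f) ∧ 0 ≤ d*f ∧ 0 ≤ e*(d+f) := by
  rcases hS with ⟨h1, h2, h3⟩ | ⟨h1, h2, h3⟩ <;>
    refine ⟨?_, ?_, ?_, ?_, ?_, ?_⟩ <;> nlinarith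

/-- for a ℤ-graded vertex algebra `V = ⊕ V[m]` (internal grading,
products of degree 0, vacuum in degree 0), the degenerate bilinear products
`u ∗_(n) v = u_(n) v` if `deg u · deg v ≥ 0`, `= 0` if `deg u · deg v < 0`
(extended bilinearly) again satisfy the vertex algebra axioms: the vacuum axioms,
truncation, and the Borcherds identity. -/
theorem degenerate_products_vertex_algebra
    (V : Type) [AddCommGroup V] [Module ℂ V] (𝒱 : VertexAlgebra V)
    (P : ℤ → Submodule ℂ V) [DirectSum.Decomposition P]
    (hvac : 𝒱.vac ∈ P 0)
    (hgr : ∀ (d e n : ℤ), ∀ u ∈ P d, ∀ v ∈ P e, 𝒱.mul n u v ∈ P (d + e))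
    (star : ℤ → V →ₗ[ℂ] V →ₗ[ℂ] V)
    (hstar : ∀ (d e n : ℤ), ∀ u ∈ P d, ∀ v ∈ P e,
      star n u v = if 0 ≤ d * e then 𝒱.mul n u v else 0) :
    (∀ a b : V, ∃ N : ℤ, ∀ n : ℤ, N ≤ n → star n a b = 0) ∧
    (∀ (n : ℤ) (a : V), star n 𝒱.vac a = if n = -1 then a else 0) ∧
    (∀ a : V, star (-1) a 𝒱.vac = a) ∧
    (∀ (a : V) (n : ℤ), 0 ≤ n → star n a 𝒱.vac = 0) ∧
    (∀ (a b c : V) (m n k : ℤ),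
      (∑ᶠ j : ℕ, Ring.choose m j • star (m + k - (j : ℤ)) (star (n + (j : ℤ)) a b) c) =
      ∑ᶠ j : ℕ, ((-1 : ℤ) ^ j * Ring.choose n j) •
        (star (m + n - (j : ℤ)) a (star (k + (j : ℤ)) b c)
          - (n.negOnePow : ℤ) • star (n + k - (j : ℤ)) b (star (m + (j : ℤ)) a c))) := by
  -- truncation for star
  have htrunc : ∀ a b : V, ∃ N : ℤ, ∀ n : ℤ, N ≤ n → star n a b = 0 := by
    intro a
    refine DirectSum.Decomposition.inductionOn P
      (motive := fun a => ∀ b : V, ∃ N : ℤ, ∀ n : ℤ, N ≤ n → star n a b = 0) ?_ ?_ ?_ a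
    · intro b; exact ⟨0, fun n _ => by simp⟩
    · intro d x
      intro b
      refine DirectSum.Decomposition.inductionOn P
        (motive := fun b => ∃ N : ℤ, ∀ n : ℤ, N ≤ n → star n (↑x) b = 0) ?_ ?_ ?_ b
      · exact ⟨0, fun n _ => by simp⟩
      · intro e y
        obtain ⟨N, hN⟩ := 𝒱.truncation (↑x) (↑y)
        refine ⟨N, fun n hn => ?_⟩
        rw [hstar d e n _ x.2 _ y.2]
        split_ifs
        · exact hN n hn
        · rfl
      · rintro u v ⟨N1, h1⟩ ⟨N2, h2⟩
        refine ⟨max N1 N2, fun n hn => ?_⟩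
        rw [map_add, h1 n (le_trans (le_max_left _ _) hn),
          h2 n (le_trans (le_max_right _ _) hn), add_zero]
    · rintro u v h1 h2 b
      obtain ⟨N1, h1⟩ := h1 b
      obtain ⟨N2, h2⟩ := h2 b
      refine ⟨max N1 N2, fun n hn => ?_⟩
      rw [map_add, LinearMap.add_apply, h1 n (le_trans (le_max_left _ _) hn),
        h2 n (le_trans (le_max_right _ _) hn), add_zero]
  -- star with vacuum on the left agrees with mul
  have hvacl : ∀ (n : ℤ) (a : V), star n 𝒱.vac a = 𝒱.mul n 𝒱.vac a := by
    intro n a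
    refine DirectSum.Decomposition.inductionOn P
      (motive := fun a => star n 𝒱.vac a = 𝒱.mul n 𝒱.vac a) ?_ ?_ ?_ a
    · simp
    · intro e y
      rw [hstar 0 e n _ hvac _ y.2, if_pos (by simp)]
    · intro u v h1 h2
      rw [map_add, map_add, h1, h2]
  -- star with vacuum on the right agrees with mul
  have hvacr : ∀ (n : ℤ) (a : V), star n a 𝒱.vac = 𝒱.mul n a 𝒱.vac := by
    intro n a
    refine DirectSum.Decomposition.inductionOn P
      (motive := fun a => star n a 𝒱.vac = 𝒱.mul n a 𝒱.vac) ?_ ?_ ?_ a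
    · simp
    · intro e y
      rw [hstar e 0 n _ y.2 _ hvac, if_pos (by simp)]
    · intro u v h1 h2
      rw [map_add, map_add, LinearMap.add_apply, LinearMap.add_apply, h1, h2]
  -- finite-support lemmas
  have suppL : ∀ (m n k : ℤ) (a b c : V),
      (Function.support fun j : ℕ =>
        Ring.choose m j • star (m + k - (j : ℤ)) (star (n + (j : ℤ)) a b) c).Finite := by
    intro m n k a b c
    obtain ⟨N, hN⟩ := htrunc a b
    refine supp_fin _ (N - n) (fun j hj => ?_)
    rw [hN (n + j) (by omega)]
    simp
  have suppR : ∀ (m n k : ℤ) (a b c : V),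
      (Function.support fun j : ℕ => ((-1 : ℤ) ^ j * Ring.choose n j) •
        (star (m + n - (j : ℤ)) a (star (k + (j : ℤ)) b c)
          - (n.negOnePow : ℤ) • star (n + k - (j : ℤ)) b (star (m + (j : ℤ)) a c))).Finite := by
    intro m n k a b c
    obtain ⟨N1, h1⟩ := htrunc b c
    obtain ⟨N2, h2⟩ := htrunc a c
    refine supp_fin _ (max (N1 - k) (N2 - m)) (fun j hj => ?_)
    rw [h1 (k + j) (by omega), h2 (m + j) (by omega)]
    simp
  refine ⟨htrunc, fun n a => (hvacl n a).trans (𝒱.vac_mul n a),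
    fun a => (hvacr (-1) a).trans (𝒱.mul_vac a),
    fun a n hn => (hvacr n a).trans (𝒱.mul_vac_nonneg a n hn), ?_⟩
  intro a b c m n k
  revert b c
  refine DirectSum.Decomposition.inductionOn P
    (motive := fun a => ∀ b c : V,
      (∑ᶠ j : ℕ, Ring.choose m j • star (m + k - (j : ℤ)) (star (n + (j : ℤ)) a b) c) =
      ∑ᶠ j : ℕ, ((-1 : ℤ) ^ j * Ring.choose n j) •
        (star (m + n - (j : ℤ)) a (star (k + (j : ℤ)) b c)
          - (n.negOnePow : ℤ) • star (n + k - (j : ℤ)) b (star (m + (j : ℤ)) a c))) ?_ ?_ ?_ a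
  · intro b c; simp
  · intro d x
    intro b
    refine DirectSum.Decomposition.inductionOn P
      (motive := fun b => ∀ c : V,
        (∑ᶠ j : ℕ, Ring.choose m j • star (m + k - (j : ℤ)) (star (n + (j : ℤ)) (↑x) b) c) =
        ∑ᶠ j : ℕ, ((-1 : ℤ) ^ j * Ring.choose n j) •
          (star (m + n - (j : ℤ)) (↑x) (star (k + (j : ℤ)) b c)
            - (n.negOnePow : ℤ) • star (n + k - (j : ℤ)) b (star (m + (j : ℤ)) (↑x) c))) ?_ ?_ ?_ b
    · intro c; simp
    · intro e y
      intro c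
      refine DirectSum.Decomposition.inductionOn P
        (motive := fun c =>
          (∑ᶠ j : ℕ, Ring.choose m j • star (m + k - (j : ℤ)) (star (n + (j : ℤ)) (↑x) (↑y)) c) =
          ∑ᶠ j : ℕ, ((-1 : ℤ) ^ j * Ring.choose n j) •
            (star (m + n - (j : ℤ)) (↑x) (star (k + (j : ℤ)) (↑y) c)
              - (n.negOnePow : ℤ) • star (n + k - (j : ℤ)) (↑y) (star (m + (j : ℤ)) (↑x) c))) ?_ ?_ ?_ c
      · simp
      · -- core homogeneous case
        intro f z
        by_cases hS : (0 ≤ d ∧ 0 ≤ e ∧ 0 ≤ f) ∨ (d ≤ 0 ∧ e ≤ 0 ∧ f ≤ 0)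
        · obtain ⟨p1, p2, p3, p4, p5, p6⟩ := prodsS d e f hS
          have h1 : ∀ t : ℤ, star t (↑x) (↑y) = 𝒱.mul t (↑x) (↑y) := fun t => by
            rw [hstar d e t _ x.2 _ y.2, if_pos p1]
          have h2 : ∀ t t' : ℤ, star t (𝒱.mul t' (↑x) (↑y)) (↑z)
              = 𝒱.mul t (𝒱.mul t' (↑x) (↑y)) (↑z) := fun t t' => by
            rw [hstar (d + e) f t _ (hgr d e t' _ x.2 _ y.2) _ z.2, if_pos p2]
          have h3 : ∀ t : ℤ, star t (↑y) (↑z) = 𝒱.mul t (↑y) (↑z) := fun t => by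
            rw [hstar e f t _ y.2 _ z.2, if_pos p3]
          have h4 : ∀ t t' : ℤ, star t (↑x) (𝒱.mul t' (↑y) (↑z))
              = 𝒱.mul t (↑x) (𝒱.mul t' (↑y) (↑z)) := fun t t' => by
            rw [hstar d (e + f) t _ x.2 _ (hgr e f t' _ y.2 _ z.2), if_pos p4]
          have h5 : ∀ t : ℤ, star t (↑x) (↑z) = 𝒱.mul t (↑x) (↑z) := fun t => by
            rw [hstar d f t _ x.2 _ z.2, if_pos p5]
          have h6 : ∀ t t' : ℤ, star t (↑y) (𝒱.mul t' (↑x) (↑z))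
              = 𝒱.mul t (↑y) (𝒱.mul t' (↑x) (↑z)) := fun t t' => by
            rw [hstar e (d + f) t _ y.2 _ (hgr d f t' _ x.2 _ z.2), if_pos p6]
          simp only [h1, h2, h3, h4, h5, h6]
          exact 𝒱.borcherds (↑x) (↑y) (↑z) m n k
        · have L0 : ∀ j : ℕ,
              star (m + k - (j : ℤ)) (star (n + (j : ℤ)) (↑x) (↑y)) (↑z) = 0 := by
            intro j
            by_cases hde : 0 ≤ d * e
            · rw [hstar d e _ _ x.2 _ y.2, if_pos hde,
                hstar (d + e) f _ _ (hgr d e _ _ x.2 _ y.2) _ z.2, if_neg]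
              intro hc; exact hS (signA d e f hde hc)
            · rw [hstar d e _ _ x.2 _ y.2, if_neg hde]; simp
          have X0 : ∀ j : ℕ,
              star (m + n - (j : ℤ)) (↑x) (star (k + (j : ℤ)) (↑y) (↑z)) = 0 := by
            intro j
            by_cases hef : 0 ≤ e * f
            · rw [hstar e f _ _ y.2 _ z.2, if_pos hef,
                hstar d (e + f) _ _ x.2 _ (hgr e f _ _ y.2 _ z.2), if_neg]
              intro hc; exact hS (signB d e f hef hc)
            · rw [hstar e f _ _ y.2 _ z.2, if_neg hef]; simp
          have Y0 : ∀ j : ℕ,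
              star (n + k - (j : ℤ)) (↑y) (star (m + (j : ℤ)) (↑x) (↑z)) = 0 := by
            intro j
            by_cases hdf : 0 ≤ d * f
            · rw [hstar d f _ _ x.2 _ z.2, if_pos hdf,
                hstar e (d + f) _ _ y.2 _ (hgr d f _ _ x.2 _ z.2), if_neg]
              intro hc; exact hS (signC d e f hdf hc)
            · rw [hstar d f _ _ x.2 _ z.2, if_neg hdf]; simp
          simp only [L0, X0, Y0, smul_zero, sub_zero, zero_sub, neg_zero, finsum_zero]
      · -- additivity in c
        intro u v hu hv
        simp only [map_add, LinearMap.add_apply, smul_add, smul_sub]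
        rw [finsum_add_distrib (suppL m n k (↑x) (↑y) u) (suppL m n k (↑x) (↑y) v), hu, hv]
        rw [← finsum_add_distrib (suppR m n k (↑x) (↑y) u) (suppR m n k (↑x) (↑y) v)]
        congr 1
        funext j
        simp only [smul_sub, smul_add]
        abel
    · -- additivity in b
      intro u v hu hv c
      simp only [map_add, LinearMap.add_apply, smul_add, smul_sub]
      rw [finsum_add_distrib (suppL m n k (↑x) u c) (suppL m n k (↑x) v c), hu c, hv c]
      rw [← finsum_add_distrib (suppR m n k (↑x) u c) (suppR m n k (↑x) v c)]
      congr 1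
      funext j
      simp only [smul_sub, smul_add]
      abel
  · -- additivity in a
    intro u v hu hv b c
    simp only [map_add, LinearMap.add_apply, smul_add, smul_sub]
    rw [finsum_add_distrib (suppL m n k u b c) (suppL m n k v b c), hu b c, hv b c]
    rw [← finsum_add_distrib (suppR m n k u b c) (suppR m n k v b c)]
    congr 1
    funext j
    simp only [smul_sub, smul_add]
    abel
end
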